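/- Let x_1^n be a string over {1,...,D}, let s ≥ L(x_1^n) where L denotes the depth, and define P(x_1^m, •) := Σ_{k=s+1}^{m−1} P(x_1^m, k) for m ≥ 1. Then P(x_1^m, •) = 0 for m < s+2, the recursion P(x_1^{m+1}, •) = [P(x_1^m, •) + q_m·P(x_1^m, s)]·B(x_{m+1}|x_1^m, s) holds for all m with s+1 ≤ m ≤ n−1, and consequently P(x_1^n) = Σ_{k=−1}^{s} P(x_1^n, k) + P(x_1^n, •). -/

import Mathlib

open Filter MeasureTheory
open scoped Topology

/-- Number of occurrences `c(w|z)` of `w` as a substring of `z`. -/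
def cnt {D : ℕ} (w z : List (Fin D)) : ℕ :=
  ((List.range (z.length - w.length + 1)).filter
    (fun i => (z.drop i).take w.length = w)).length

/-- Count `c(w | z_1^{m-1})` of `w` in the string `z` with its last symbol removed,
with the convention that counting in a block of length `-1` (i.e. when `z` itself is
empty) gives `0`. -/
def cntPred {D : ℕ} (w z : List (Fin D)) : ℕ :=
  if z = [] then 0 else cnt w z.dropLast

/-- The prefix `x_1^n` of the one-sided sequence `x` (0-indexed: `x i = x_{i+1}`). -/
def pref {D : ℕ} (x : ℕ → Fin D) (n : ℕ) : List (Fin D) :=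
  (List.range n).map x

/-- Adaptive Markov predictor: the natural-number index corresponds to the Markov
order shifted by one, so `Bpred D xs a (k+1) = B(a | xs, k)` and
`Bpred D xs a 0 = B(a | xs, -1) = 1/D`, where
`B(x_{n+1}|x_1^n, k) = (c(x_{n+1-k}^{n+1}|x_1^n) + B(x_{n+1}|x_1^n, k-1)) /
(c(x_{n+1-k}^{n}|x_1^{n-1}) + 1)`.  Counts of substrings whose indices fall outside
the string are taken to be zero. -/
noncomputable def Bpred (D : ℕ) (xs : List (Fin D)) (a : Fin D) : ℕ → ℝ
  | 0 => 1 / D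
  | k + 1 =>
    if k ≤ xs.length then
      ((cnt (xs.drop (xs.length - k) ++ [a]) xs : ℝ) + Bpred D xs a k) /
      ((cntPred (xs.drop (xs.length - k)) xs : ℝ) + 1)
    else Bpred D xs a k

/-- Partial switch distribution `P(x_1^n, k)` with Markov order `k : ℤ`:
`P(x_1,-1) = p_0 B(x_1|-1)`, `P(x_1,0) = (1-p_0) B(x_1|0)`, `P(x_1^n,k) = 0`
for `k < -1` or `k ≥ n`, and
`P(x_1^{n+1},k) = [p_n P(x_1^n,k) + (1-p_n) P(x_1^n,k-1)] B(x_{n+1}|x_1^n,k)`. -/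
noncomputable def Ppart (D : ℕ) (p : ℕ → ℝ) (x : ℕ → Fin D) : ℕ → ℤ → ℝ
  | 0, _ => 0
  | 1, k =>
    if k = -1 then p 0 * Bpred D [] (x 0) 0
    else if k = 0 then (1 - p 0) * Bpred D [] (x 0) 1
    else 0
  | n + 2, k =>
    if -1 ≤ k ∧ k ≤ (n : ℤ) + 1 then
      (p (n + 1) * Ppart D p x (n + 1) k +
        (1 - p (n + 1)) * Ppart D p x (n + 1) (k - 1)) *
        Bpred D (pref x (n + 1)) (x (n + 1)) (k + 1).toNat
    else 0

/-- The plain switch distribution `P(x_1^n) = Σ_{k=-1}^{n-1} P(x_1^n, k)`. -/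
noncomputable def swP (D : ℕ) (p : ℕ → ℝ) (x : ℕ → Fin D) (n : ℕ) : ℝ :=
  ∑ kk ∈ Finset.range (n + 1), Ppart D p x n ((kk : ℤ) - 1)

/-- The depth `L(z)`: maximal length of a substring occurring at least twice in `z`
(`0` if there is none). -/
noncomputable def depth {D : ℕ} (z : List (Fin D)) : ℕ :=
  sSup {k | ∃ w : List (Fin D), w.length = k ∧ 2 ≤ cnt w z}

lemma cnt_eq_card {D : ℕ} (w z : List (Fin D)) :
    cnt w z = ((Finset.range (z.length - w.length + 1)).filter
      (fun i => (z.drop i).take w.length = w)).card := rfl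

lemma occ_length {D : ℕ} {w z : List (Fin D)} {i : ℕ} (hw : 1 ≤ w.length)
    (h : (z.drop i).take w.length = w) : i + w.length ≤ z.length := by
  have := congrArg List.length h
  simp only [List.length_take, List.length_drop] at this
  omega

lemma occ_append {D : ℕ} {w z : List (Fin D)} (t : List (Fin D)) {i : ℕ}
    (hle : i + w.length ≤ z.length) (h : (z.drop i).take w.length = w) :
    ((z ++ t).drop i).take w.length = w := by
  rw [List.drop_append_of_le_length (by omega),
    List.take_append_of_le_length (by simp [List.length_drop]; omega)]
  exact h

lemma two_le_cnt {D : ℕ} {w z : List (Fin D)} {i j : ℕ} (hij : i ≠ j) (hw : 1 ≤ w.length)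
    (hi : (z.drop i).take w.length = w) (hj : (z.drop j).take w.length = w) :
    2 ≤ cnt w z := by
  have hi' := occ_length hw hi
  have hj' := occ_length hw hj
  rw [cnt_eq_card]
  refine Finset.one_lt_card.mpr ⟨i, ?_, j, ?_, hij⟩ <;>
    refine Finset.mem_filter.mpr ⟨Finset.mem_range.mpr (by omega), by assumption⟩

lemma exists_occ {D : ℕ} {w z : List (Fin D)} (h : 1 ≤ cnt w z) :
    ∃ i, (z.drop i).take w.length = w := by
  rw [cnt_eq_card] at h
  obtain ⟨i, hi⟩ := Finset.card_pos.mp h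
  exact ⟨i, by simpa using (Finset.mem_filter.mp hi).2⟩

lemma cnt_len {D : ℕ} {w z : List (Fin D)} (h : 2 ≤ cnt w z) : w.length ≤ z.length := by
  rw [cnt_eq_card] at h
  have := Finset.card_filter_le (Finset.range (z.length - w.length + 1))
    (fun i => (z.drop i).take w.length = w)
  rw [Finset.card_range] at this
  omega

lemma le_depth {D : ℕ} {w z : List (Fin D)} (h : 2 ≤ cnt w z) : w.length ≤ depth z :=
  le_csSup ⟨z.length, fun k ⟨u, hu, h2⟩ => hu ▸ cnt_len h2⟩ ⟨w, rfl, h⟩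

lemma pref_length {D : ℕ} (x : ℕ → Fin D) (m : ℕ) : (pref x m).length = m := by
  simp [pref]

lemma pref_eq_append {D : ℕ} (x : ℕ → Fin D) {m n : ℕ} (h : m ≤ n) :
    pref x n = pref x m ++ (pref x n).drop m := by
  have : pref x m = (pref x n).take m := by
    simp [pref, ← List.map_take, List.take_range, Nat.min_eq_left h]
  rw [this, List.take_append_drop]

lemma cnt_mono {D : ℕ} (w : List (Fin D)) (x : ℕ → Fin D) {m n : ℕ} (h : m ≤ n)
    (hw : 1 ≤ w.length) : cnt w (pref x m) ≤ cnt w (pref x n) := by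
  rw [cnt_eq_card, cnt_eq_card]
  apply Finset.card_le_card
  intro i hi
  obtain ⟨h1, h2⟩ := Finset.mem_filter.mp hi
  have hle : i + w.length ≤ (pref x m).length := occ_length hw (by simpa using h2)
  refine Finset.mem_filter.mpr ⟨Finset.mem_range.mpr ?_, ?_⟩
  · rw [pref_length] at hle ⊢; omega
  · rw [pref_eq_append x h]
    simpa using occ_append _ hle (by simpa using h2)

lemma no_second_occ {D : ℕ} (x : ℕ → Fin D) {n s m k i : ℕ}
    (hs : depth (pref x n) ≤ s) (hmn : m ≤ n) (hk : s + 1 ≤ k) (hkm : k ≤ m)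
    (hi : i + k ≤ m - 1)
    (hocc : ((pref x m).drop i).take k = (pref x m).drop (m - k)) : False := by
  set w := (pref x m).drop (m - k) with hw
  have hwlen : w.length = k := by rw [hw, List.length_drop, pref_length]; omega
  have hsuf : ((pref x m).drop (m - k)).take w.length = w := by
    rw [← hw]; simp
  have h2 : 2 ≤ cnt w (pref x m) :=
    two_le_cnt (i := i) (j := m - k) (by omega) (by omega) (by rw [hwlen]; exact hocc) hsuf
  have h2' : 2 ≤ cnt w (pref x n) := le_trans h2 (cnt_mono w x hmn (by omega))
  have := le_depth h2'
  omega

lemma Bpred_const {D : ℕ} (x : ℕ → Fin D) {n s m : ℕ} (hs : depth (pref x n) ≤ s)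
    (hm : s + 1 ≤ m) (hmn : m ≤ n) (a : Fin D) :
    ∀ k, s + 1 ≤ k → Bpred D (pref x m) a k = Bpred D (pref x m) a (s + 1) := by
  intro k hk
  induction k with
  | zero => omega
  | succ k ih =>
    rcases Nat.lt_or_ge k (s + 1) with h | h
    · have : k + 1 = s + 1 := by omega
      rw [this]
    · rw [← ih h, Bpred]
      split
      case isTrue hkl =>
        rw [pref_length] at hkl
        have hwd : (pref x m).length - k = m - k := by rw [pref_length]
        set w := (pref x m).drop ((pref x m).length - k) with hw
        have hw' : w = (pref x m).drop (m - k) := by rw [hw, hwd]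
        have hwlen : w.length = k := by rw [hw', List.length_drop, pref_length]; omega
        have hA : cnt (w ++ [a]) (pref x m) = 0 := by
          by_contra hc
          obtain ⟨i, hi⟩ := exists_occ (by omega : 1 ≤ cnt (w ++ [a]) (pref x m))
          have hlen : (w ++ [a]).length = k + 1 := by simp [hwlen]
          have hib : i + (k + 1) ≤ m := by
            have := occ_length (by omega) hi
            rwa [hlen, pref_length] at this
          have hocc : ((pref x m).drop i).take k = (pref x m).drop (m - k) := by
            have := congrArg (List.take k) hi
            rw [List.take_take, hlen] at this
            rw [Nat.min_eq_left (by omega)] at this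
            rw [this, ← hw', ← hwlen, List.take_append_of_le_length le_rfl,
              List.take_length]
          exact no_second_occ x hs hmn (by omega) (by omega) (by omega) hocc
        have hB : cntPred w (pref x m) = 0 := by
          have hne : pref x m ≠ [] := by
            intro hcon
            have := congrArg List.length hcon
            rw [pref_length] at this
            simp at this; omega
          rw [cntPred, if_neg hne]
          by_contra hc
          obtain ⟨i, hi⟩ := exists_occ (by omega : 1 ≤ cnt w (pref x m).dropLast)
          have hib : i + k ≤ m - 1 := by
            have := occ_length (by omega) hi
            rwa [hwlen, List.length_dropLast, pref_length] at this
          have hocc : ((pref x m).drop i).take k = (pref x m).drop (m - k) := by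
            have hap : (pref x m).dropLast ++ [(pref x m).getLast hne] = pref x m :=
              List.dropLast_append_getLast hne
            have := occ_append [(pref x m).getLast hne]
              (by rw [hwlen, List.length_dropLast, pref_length]; omega) hi
            rw [hap, hwlen] at this
            rw [this, hw']
          exact no_second_occ x hs hmn (by omega) (by omega) hib hocc
        rw [hA, hB]
        push_cast
        rw [zero_add, zero_add, div_one]
      case isFalse => rfl

lemma Ppart_eq_zero (D : ℕ) (p : ℕ → ℝ) (x : ℕ → Fin D) (m : ℕ) (k : ℤ)
    (h : (m : ℤ) ≤ k) : Ppart D p x m k = 0 := by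
  match m with
  | 0 => rfl
  | 1 => rw [Ppart, if_neg (by omega), if_neg (by omega)]
  | (m + 2) => rw [Ppart, if_neg (by push_cast; omega)]

/-- Let `x_1^n` be a string over `{1,...,D}`, `s ≥ L(x_1^n)`, and define
`P(x_1^m, •) := Σ_{k=s+1}^{m−1} P(x_1^m, k)`. Then `P(x_1^m, •) = 0` for `m < s+2`,
the recursion `P(x_1^{m+1}, •) = [P(x_1^m, •) + q_m·P(x_1^m, s)]·B(x_{m+1}|x_1^m, s)`
holds for `s+1 ≤ m ≤ n−1`, and consequently
`P(x_1^n) = Σ_{k=−1}^{s} P(x_1^n, k) + P(x_1^n, •)`. -/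
theorem truncated_switch_recursion
    (D : ℕ) (hD : 2 ≤ D) (p : ℕ → ℝ) (hp : ∀ n, p n ∈ Set.Ioo (0 : ℝ) 1)
    (hprod : ∃ L, 0 < L ∧ Tendsto (fun N : ℕ => ∏ i ∈ Finset.range N, p i) atTop (𝓝 L))
    (n : ℕ) (x : ℕ → Fin D) (s : ℕ) (hs : depth (pref x n) ≤ s) :
    (∀ m : ℕ, m < s + 2 → (∑ k ∈ Finset.Ico (s + 1) m, Ppart D p x m (k : ℤ)) = 0) ∧
    (∀ m : ℕ, s + 1 ≤ m → m + 1 ≤ n →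
      (∑ k ∈ Finset.Ico (s + 1) (m + 1), Ppart D p x (m + 1) (k : ℤ)) =
        ((∑ k ∈ Finset.Ico (s + 1) m, Ppart D p x m (k : ℤ)) +
            (1 - p m) * Ppart D p x m (s : ℤ)) *
          Bpred D (pref x m) (x m) (s + 1)) ∧
    swP D p x n =
      (∑ kk ∈ Finset.range (s + 2), Ppart D p x n ((kk : ℤ) - 1)) +
        ∑ k ∈ Finset.Ico (s + 1) n, Ppart D p x n (k : ℤ) := by
  refine ⟨?_, ?_, ?_⟩
  · intro m hm
    rw [Finset.Ico_eq_empty (by omega), Finset.sum_empty]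
  · intro m hm hmn
    obtain ⟨m', rfl⟩ : ∃ m', m = m' + 1 := ⟨m - 1, by omega⟩
    have hBc := Bpred_const (D := D) x hs (show s + 1 ≤ m' + 1 by omega) (by omega)
      (x (m' + 1))
    have step : ∀ k ∈ Finset.Ico (s + 1) (m' + 2),
        Ppart D p x (m' + 2) (k : ℤ) =
          (p (m' + 1) * Ppart D p x (m' + 1) (k : ℤ) +
            (1 - p (m' + 1)) * Ppart D p x (m' + 1) ((k : ℤ) - 1)) *
            Bpred D (pref x (m' + 1)) (x (m' + 1)) (s + 1) := by
      intro k hk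
      simp only [Finset.mem_Ico] at hk
      rw [Ppart, if_pos (by push_cast; omega)]
      congr 1
      have h1 : ((k : ℤ) + 1).toNat = k + 1 := by omega
      rw [h1, hBc (k + 1) (by omega)]
    rw [Finset.sum_congr rfl step, ← Finset.sum_mul]
    congr 1
    have e1 : ∑ k ∈ Finset.Ico (s + 1) (m' + 2), Ppart D p x (m' + 1) (k : ℤ) =
        ∑ k ∈ Finset.Ico (s + 1) (m' + 1), Ppart D p x (m' + 1) (k : ℤ) := by
      rw [Finset.sum_Ico_succ_top (by omega : s + 1 ≤ m' + 1),
        Ppart_eq_zero D p x (m' + 1) _ (by push_cast; omega), add_zero]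
    have e2 : ∑ k ∈ Finset.Ico (s + 1) (m' + 2), Ppart D p x (m' + 1) ((k : ℤ) - 1) =
        Ppart D p x (m' + 1) (s : ℤ) +
          ∑ k ∈ Finset.Ico (s + 1) (m' + 1), Ppart D p x (m' + 1) (k : ℤ) := by
      have h1 : ∑ k ∈ Finset.Ico (s + 1) (m' + 2), Ppart D p x (m' + 1) ((k : ℤ) - 1) =
          ∑ k ∈ Finset.Ico s (m' + 1), Ppart D p x (m' + 1) (k : ℤ) := by
        rw [Finset.sum_Ico_eq_sum_range, Finset.sum_Ico_eq_sum_range]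
        refine Finset.sum_congr (by congr 1; omega) ?_
        intro i _
        congr 1
        push_cast
        ring
      rw [h1, Finset.sum_eq_sum_Ico_succ_bot (by omega : s < m' + 1)]
    rw [Finset.sum_add_distrib, ← Finset.mul_sum, ← Finset.mul_sum, e1, e2]
    have hone := (hp (m' + 1)).1
    ring
  · rcases le_or_gt (s + 2) (n + 1) with h | h
    · rw [swP, Finset.range_eq_Ico,
        ← Finset.sum_Ico_consecutive _ (Nat.zero_le (s + 2)) h]
      congr 1
      · rw [Finset.range_eq_Ico]
      rw [Finset.sum_Ico_eq_sum_range, Finset.sum_Ico_eq_sum_range]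
      refine Finset.sum_congr (by congr 1; omega) ?_
      intro i _
      congr 1
      push_cast
      ring
    · rw [swP, Finset.Ico_eq_empty (by omega), Finset.sum_empty, add_zero]
      exact Finset.sum_subset (Finset.range_subset_range.mpr (by omega))
        (fun kk h1 h2 => Ppart_eq_zero D p x n ((kk : ℤ) - 1) (by
          simp only [Finset.mem_range] at h1 h2; omega))
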